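/- Let μ be a probability measure on ℝ, let ε ∈ (0,1), δ ∈ (0,1), and let integers r ≥ 1 and N ≥ r satisfy B(r−1; N, ε) ≤ δ. If q₁, …, q_N are drawn i.i.d. from μ (i.e., according to the N-fold product measure μ^N on ℝ^N), then with probability no smaller than 1−δ over the multisample, the r-th largest value q_r⁺ = rmax_r{q_i}_{i=1}^N satisfies μ{ q ∈ ℝ : q > q_r⁺ } ≤ ε. -/

import Mathlib

open MeasureTheory

/-- Binomial cumulative distribution function `B(k; N, ε)`,
with the convention that it is `0` for `k < 0`. -/
noncomputable def binomCdf (k : ℤ) (N : ℕ) (ε : ℝ) : ℝ :=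
  ∑ i ∈ Finset.range (N + 1),
    if (i : ℤ) ≤ k then (N.choose i : ℝ) * ε ^ i * (1 - ε) ^ (N - i) else 0

/-- The `r`-th largest value of the collection `{q i}_{i=1}^N`
(the element at position `r` in decreasing order, counted with multiplicity). -/
noncomputable def rmax {N : ℕ} (r : ℕ) (q : Fin N → ℝ) : ℝ :=
  ((List.ofFn q).insertionSort (· ≤ ·)).getD (N - r) 0

open ENNReal


noncomputable def bsum (r N : ℕ) (p : ℝ) : ℝ :=
  ∑ i ∈ Finset.range r, (N.choose i : ℝ) * p ^ i * (1 - p) ^ (N - i)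

lemma bsum_nonneg {r N : ℕ} {p : ℝ} (h0 : 0 ≤ p) (h1 : p ≤ 1) : 0 ≤ bsum r N p := by
  apply Finset.sum_nonneg
  intro i _
  have h2 : (0:ℝ) ≤ 1 - p := by linarith
  exact mul_nonneg (mul_nonneg (Nat.cast_nonneg _) (pow_nonneg h0 _)) (pow_nonneg h2 _)

lemma bsum_mono_r {r r' N : ℕ} {p : ℝ} (h0 : 0 ≤ p) (h1 : p ≤ 1) (h : r ≤ r') :
    bsum r N p ≤ bsum r' N p := by
  apply Finset.sum_le_sum_of_subset_of_nonneg (Finset.range_subset_range.mpr h)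
  intro i _ _
  have h2 : (0:ℝ) ≤ 1 - p := by linarith
  exact mul_nonneg (mul_nonneg (Nat.cast_nonneg _) (pow_nonneg h0 _)) (pow_nonneg h2 _)

lemma bsum_eq_of_ge {r N : ℕ} {p : ℝ} (h : N + 1 ≤ r) : bsum r N p = bsum (N + 1) N p := by
  unfold bsum
  rw [← Finset.sum_subset (Finset.range_subset_range.mpr h)]
  intro i hi hni
  simp only [Finset.mem_range] at hi hni
  rw [Nat.choose_eq_zero_of_lt (by omega)]
  ring

lemma bsum_pascal {r N : ℕ} (p : ℝ) (hr : 1 ≤ r) (hrN : r ≤ N + 1) :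
    bsum r (N + 1) p = (1 - p) * bsum r N p + p * bsum (r - 1) N p := by
  obtain ⟨s, rfl⟩ : ∃ s, r = s + 1 := ⟨r - 1, by omega⟩
  unfold bsum
  simp only [Nat.add_sub_cancel]
  rw [Finset.mul_sum, Finset.mul_sum, Finset.sum_range_succ' (fun i =>
    ((N+1).choose i : ℝ) * p ^ i * (1 - p) ^ (N + 1 - i)) s,
    Finset.sum_range_succ' (fun i => (1-p) * ((N.choose i : ℝ) * p ^ i * (1 - p) ^ (N - i))) s]
  have h1 : ∀ i ∈ Finset.range s, ((N+1).choose (i+1) : ℝ) * p ^ (i+1) * (1 - p) ^ (N + 1 - (i+1))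
      = (1-p) * ((N.choose (i+1) : ℝ) * p ^ (i+1) * (1 - p) ^ (N - (i+1)))
        + p * ((N.choose i : ℝ) * p ^ i * (1 - p) ^ (N - i)) := by
    intro i hi
    simp only [Finset.mem_range] at hi
    have hiN : i + 1 ≤ N := by omega
    rw [Nat.choose_succ_succ]
    have e1 : N + 1 - (i + 1) = (N - (i+1)) + 1 := by omega
    have e2 : N - i = (N - (i + 1)) + 1 := by omega
    rw [e1, e2]
    push_cast
    ring
  rw [Finset.sum_congr rfl h1, Finset.sum_add_distrib]
  have e0 : N + 1 - 0 = (N - 0) + 1 := by omega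
  simp only [Nat.choose_zero_right, pow_zero, e0]
  ring

lemma bsum_zero_N {r : ℕ} (hr : 1 ≤ r) (p : ℝ) : bsum r 0 p = 1 := by
  unfold bsum
  rw [Finset.sum_eq_single 0]
  · simp
  · intro i _ hi
    rw [Nat.choose_eq_zero_of_lt (by omega)]
    ring
  · intro h
    exact absurd (Finset.mem_range.mpr (by omega)) h

lemma bsum_full (N : ℕ) (p : ℝ) : bsum (N + 1) N p = 1 := by
  have h : bsum (N + 1) N p = (p + (1 - p)) ^ N := by
    rw [add_pow]
    apply Finset.sum_congr rfl
    intro i _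
    ring
  rw [h]
  norm_num

lemma bsum_anti (N : ℕ) : ∀ (r : ℕ) {p q : ℝ}, 0 ≤ p → q ≤ 1 → p ≤ q →
    bsum r N q ≤ bsum r N p := by
  induction N with
  | zero =>
    intro r p q hp hq hpq
    rcases Nat.eq_zero_or_pos r with h | h
    · subst h; simp [bsum]
    · rw [bsum_zero_N h, bsum_zero_N h]
  | succ N ih =>
    intro r p q hp hq hpq
    rcases Nat.eq_zero_or_pos r with h | h
    · subst h; simp [bsum]
    rcases le_or_gt (N + 2) r with h2 | h2
    · rw [bsum_eq_of_ge (by omega), bsum_eq_of_ge (p := p) (by omega), bsum_full, bsum_full]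
    rw [bsum_pascal q h (by omega), bsum_pascal p h (by omega)]
    have hq0 : 0 ≤ q := le_trans hp hpq
    have hp1 : p ≤ 1 := le_trans hpq hq
    have hA := ih r hp hq hpq
    have hB := ih (r - 1) hp hq hpq
    have hmono : bsum (r-1) N p ≤ bsum r N p := bsum_mono_r hp hp1 (by omega)
    have h1q : 0 ≤ 1 - q := by linarith
    nlinarith [mul_le_mul_of_nonneg_left hA h1q, mul_le_mul_of_nonneg_left hB hq0]

lemma countP_ofFn {N : ℕ} (q : Fin N → ℝ) (p : ℝ → Bool) :
    (List.ofFn q).countP p = (Finset.univ.filter fun i => p (q i)).card := by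
  induction N with
  | zero => simp
  | succ N ih =>
    rw [List.ofFn_succ, List.countP_cons, ih]
    rw [Finset.card_filter, Finset.card_filter, Fin.sum_univ_succ]
    simp only [Fin.succ]
    exact Nat.add_comm _ _

lemma sorted_rmax_ge {l : List ℝ} (hs : l.Pairwise (· ≤ ·)) {t : ℝ} {r : ℕ}
    (hr : 1 ≤ r) (hrl : r ≤ l.length)
    (hc : r ≤ l.countP (fun x => decide (t ≤ x))) :
    t ≤ l.getD (l.length - r) 0 := by
  set p : ℝ → Bool := fun x => decide (x < t) with hp
  set A := l.takeWhile p with hA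
  set B := l.dropWhile p with hB
  have hAB : A ++ B = l := List.takeWhile_append_dropWhile
  have hcA : A.countP (fun x => decide (t ≤ x)) = 0 := by
    rw [List.countP_eq_zero]
    intro x hx
    have := List.mem_takeWhile_imp hx
    simp only [hp, decide_eq_true_eq] at this
    simp only [decide_eq_true_eq]
    linarith
  have hcnt : l.countP (fun x => decide (t ≤ x)) =
      A.countP (fun x => decide (t ≤ x)) + B.countP (fun x => decide (t ≤ x)) := by
    rw [← hAB, List.countP_append]
  have hrB : r ≤ B.length := by
    have := (List.countP_le_length : B.countP (fun x => decide (t ≤ x)) ≤ B.length)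
    omega
  have hlen : l.length = A.length + B.length := by
    rw [← hAB, List.length_append]
  -- every element of B is ≥ t
  have hBne : B ≠ [] := by
    intro hnil
    rw [hnil] at hrB
    simp at hrB
    omega
  have hBge : ∀ x ∈ B, t ≤ x := by
    have hBs : B.Pairwise (· ≤ ·) := List.Pairwise.sublist (List.dropWhile_sublist p) hs
    obtain ⟨b, B', hB'⟩ := List.exists_cons_of_ne_nil hBne
    have hhead : p b = false := by
      have h2 := List.head?_dropWhile_not p l
      rw [← hB, hB'] at h2
      simpa using h2
    have hb : t ≤ b := by
      simp only [hp, decide_eq_false_iff_not, not_lt] at hhead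
      exact hhead
    intro x hx
    rw [hB'] at hx hBs
    rcases List.mem_cons.mp hx with rfl | hx'
    · exact hb
    · exact le_trans hb ((List.pairwise_cons.mp hBs).1 x hx')
  have hidx : l.length - r < l.length := by omega
  rw [List.getD_eq_getElem l 0 hidx]
  apply hBge
  rw [List.getElem_of_eq hAB.symm hidx]
  rw [List.getElem_append_right (by omega)]
  exact List.getElem_mem _

lemma binomCdf_eq_bsum {r N : ℕ} (hr : 1 ≤ r) (hrN : r ≤ N) (ε : ℝ) :
    binomCdf ((r : ℤ) - 1) N ε = bsum r N ε := by
  unfold binomCdf bsum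
  rw [← Finset.sum_filter]
  apply Finset.sum_congr _ (fun _ _ => rfl)
  ext i
  simp only [Finset.mem_filter, Finset.mem_range]
  omega

lemma rmax_ge_of_card {N r : ℕ} (hr : 1 ≤ r) (hrN : r ≤ N) (q : Fin N → ℝ) (t : ℝ)
    (hcard : r ≤ (Finset.univ.filter fun i => t ≤ q i).card) :
    t ≤ rmax r q := by
  set l := (List.ofFn q).insertionSort (· ≤ ·) with hl
  have hlen : l.length = N := by rw [hl, List.length_insertionSort, List.length_ofFn]
  have hsort : l.Pairwise (· ≤ ·) := List.pairwise_insertionSort _ _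
  have hperm : l.Perm (List.ofFn q) := List.perm_insertionSort _ _
  have hcnt : l.countP (fun x => decide (t ≤ x)) =
      (Finset.univ.filter fun i => t ≤ q i).card := by
    rw [hperm.countP_eq, countP_ofFn]
    congr 1
    apply Finset.filter_congr
    intro i _
    simp
  have hres := sorted_rmax_ge (t := t) hsort hr (by omega) (by omega)
  rw [hlen] at hres
  exact hres

theorem stmt0 (μ : Measure ℝ) [IsProbabilityMeasure μ]
    (ε δ : ℝ) (hε : ε ∈ Set.Ioo (0 : ℝ) 1) (hδ : δ ∈ Set.Ioo (0 : ℝ) 1)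
    (r N : ℕ) (hr : 1 ≤ r) (hrN : r ≤ N)
    (hB : binomCdf ((r : ℤ) - 1) N ε ≤ δ) :
    ENNReal.ofReal (1 - δ) ≤
      (Measure.pi fun _ : Fin N => μ)
        {q : Fin N → ℝ | μ {x : ℝ | rmax r q < x} ≤ ENNReal.ofReal ε} := by
  obtain ⟨hε0, hε1⟩ := hε
  obtain ⟨hδ0, hδ1⟩ := hδ
  set Aset : Set ℝ := {x | μ (Set.Ioi x) ≤ ENNReal.ofReal ε} with hAset
  have hup : ∀ {a b : ℝ}, a ∈ Aset → a ≤ b → b ∈ Aset := by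
    intro a b ha hab
    exact le_trans (measure_mono (Set.Ioi_subset_Ioi hab)) ha
  -- Aset is nonempty
  have hne : Aset.Nonempty := by
    have htend0 : Filter.Tendsto (fun n : ℕ => μ (Set.Ioi (n : ℝ))) Filter.atTop (nhds 0) := by
      have h1 : (⋂ n : ℕ, Set.Ioi (n : ℝ)) = ∅ := by
        ext x
        simp only [Set.mem_iInter, Set.mem_Ioi, Set.mem_empty_iff_false, iff_false, not_forall,
          not_lt]
        obtain ⟨n, hn⟩ := exists_nat_ge x
        exact ⟨n, hn⟩
      have h2 := MeasureTheory.tendsto_measure_iInter_atTop (μ := μ)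
        (s := fun n : ℕ => Set.Ioi (n : ℝ))
        (fun n => measurableSet_Ioi.nullMeasurableSet)
        (fun m n h => Set.Ioi_subset_Ioi (by exact_mod_cast h))
        ⟨0, measure_ne_top μ _⟩
      rwa [h1, measure_empty] at h2
    have hpos : (0 : ℝ≥0∞) < ENNReal.ofReal ε := ENNReal.ofReal_pos.mpr hε0
    obtain ⟨n, hn⟩ := (htend0.eventually_lt_const hpos).exists
    exact ⟨n, le_of_lt hn⟩
  -- Aset is bounded below
  have hbdd : BddBelow Aset := by
    have htend1 : Filter.Tendsto (fun n : ℕ => μ (Set.Ioi (-(n : ℝ)))) Filter.atTop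
        (nhds (μ Set.univ)) := by
      have h1 : (⋃ n : ℕ, Set.Ioi (-(n : ℝ))) = Set.univ := by
        ext x
        simp only [Set.mem_iUnion, Set.mem_Ioi, Set.mem_univ, iff_true]
        obtain ⟨n, hn⟩ := exists_nat_gt (-x)
        exact ⟨n, by linarith⟩
      have h2 := MeasureTheory.tendsto_measure_iUnion_atTop (μ := μ)
        (s := fun n : ℕ => Set.Ioi (-(n : ℝ)))
        (fun m n h => Set.Ioi_subset_Ioi (by simp; exact_mod_cast h))
      rwa [h1] at h2
    have hlt : ENNReal.ofReal ε < μ Set.univ := by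
      rw [measure_univ]
      exact ENNReal.ofReal_lt_one.mpr hε1
    obtain ⟨n, hn⟩ := (htend1.eventually_const_lt hlt).exists
    refine ⟨-(n : ℝ), fun a ha => ?_⟩
    by_contra hcon
    push_neg at hcon
    exact absurd (le_trans (measure_mono (Set.Ioi_subset_Ioi hcon.le)) ha) (not_le.mpr hn)
  set t := sInf Aset with ht
  have hmemA : ∀ s : ℝ, 0 < s → t + s ∈ Aset := by
    intro s hs
    have : sInf Aset < t + s := by rw [← ht]; linarith
    obtain ⟨a, haA, ha⟩ := (csInf_lt_iff hbdd hne).mp this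
    exact hup haA ha.le
  have hIoi_t : μ (Set.Ioi t) ≤ ENNReal.ofReal ε := by
    have hmono : Monotone (fun n : ℕ => Set.Ioi (t + 1 / (n + 1))) := by
      intro m n h
      apply Set.Ioi_subset_Ioi
      have h1 : (1 : ℝ) / (n + 1) ≤ 1 / (m + 1) := by
        apply one_div_le_one_div_of_le
        · positivity
        · exact_mod_cast (by omega : m + 1 ≤ n + 1)
      linarith
    have hU : (⋃ n : ℕ, Set.Ioi (t + 1 / (n + 1))) = Set.Ioi t := by
      ext x
      simp only [Set.mem_iUnion, Set.mem_Ioi]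
      constructor
      · rintro ⟨n, hn⟩
        have h1 : (0 : ℝ) < 1 / ((n : ℝ) + 1) := by positivity
        linarith
      · intro hx
        obtain ⟨n, hn⟩ := exists_nat_one_div_lt (by linarith : (0 : ℝ) < x - t)
        exact ⟨n, by linarith⟩
    have hlim := MeasureTheory.tendsto_measure_iUnion_atTop (μ := μ) hmono
    rw [hU] at hlim
    apply le_of_tendsto hlim
    filter_upwards with n
    exact hmemA _ (by positivity)
  have hIci_t : ENNReal.ofReal ε ≤ μ (Set.Ici t) := by
    have hanti : Antitone (fun n : ℕ => Set.Ioi (t - 1 / (n + 1))) := by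
      intro m n h
      apply Set.Ioi_subset_Ioi
      have h1 : (1 : ℝ) / (n + 1) ≤ 1 / (m + 1) := by
        apply one_div_le_one_div_of_le
        · positivity
        · exact_mod_cast (by omega : m + 1 ≤ n + 1)
      linarith
    have hI : (⋂ n : ℕ, Set.Ioi (t - 1 / (n + 1))) = Set.Ici t := by
      ext x
      simp only [Set.mem_iInter, Set.mem_Ioi, Set.mem_Ici]
      constructor
      · intro h
        by_contra hx
        push_neg at hx
        obtain ⟨n, hn⟩ := exists_nat_one_div_lt (by linarith : (0 : ℝ) < t - x)
        have := h n
        linarith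
      · intro hx n
        have h1 : (0 : ℝ) < 1 / ((n : ℝ) + 1) := by positivity
        linarith
    have hlim := MeasureTheory.tendsto_measure_iInter_atTop (μ := μ)
      (fun n => measurableSet_Ioi.nullMeasurableSet) hanti ⟨0, measure_ne_top μ _⟩
    rw [hI] at hlim
    apply ge_of_tendsto hlim
    filter_upwards with n
    have hnot : t - 1 / ((n : ℝ) + 1) ∉ Aset := by
      intro hmem
      have h2 := csInf_le hbdd hmem
      have hpos : (0 : ℝ) < 1 / ((n : ℝ) + 1) := by positivity
      rw [← ht] at h2
      linarith
    exact (not_le.mp hnot).le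
  -- probabilities
  set pe := μ (Set.Ici t) with hpe
  have hpe_ne : pe ≠ ⊤ := measure_ne_top μ _
  have hpe_le1 : pe ≤ 1 := prob_le_one
  set p := pe.toReal with hpreal
  have hp0 : 0 ≤ p := ENNReal.toReal_nonneg
  have hp1 : p ≤ 1 := by
    have := ENNReal.toReal_mono (by simp) hpe_le1
    simpa using this
  have hεp : ε ≤ p := by
    have := ENNReal.toReal_mono hpe_ne hIci_t
    rwa [ENNReal.toReal_ofReal hε0.le] at this
  have hpe_eq : pe = ENNReal.ofReal p := (ENNReal.ofReal_toReal hpe_ne).symm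
  have hIio : μ (Set.Iio t) = ENNReal.ofReal (1 - p) := by
    have h1 : μ (Set.Iio t) = 1 - pe := by
      rw [← Set.compl_Ici, measure_compl measurableSet_Ici (measure_ne_top μ _), measure_univ]
    rw [h1]
    have h2 : (1 - pe) ≠ ⊤ := ne_top_of_le_ne_top ENNReal.one_ne_top tsub_le_self
    rw [← ENNReal.ofReal_toReal h2, ENNReal.toReal_sub_of_le hpe_le1 ENNReal.one_ne_top]
    simp [hpreal]
  -- the events
  set E : Finset (Fin N) → Set (Fin N → ℝ) :=
    fun T => Set.univ.pi (fun i => if i ∈ T then Set.Ici t else Set.Iio t) with hEdef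
  set good : Set (Fin N → ℝ) :=
    {q : Fin N → ℝ | μ {x : ℝ | rmax r q < x} ≤ ENNReal.ofReal ε} with hgood
  have hsub : goodᶜ ⊆ ⋃ k ∈ Finset.range r,
      ⋃ T ∈ Finset.powersetCard k (Finset.univ : Finset (Fin N)), E T := by
    intro q hq
    simp only [hgood, Set.mem_compl_iff, Set.mem_setOf_eq, not_le] at hq
    have hlt : rmax r q < t := by
      by_contra hcon
      push_neg at hcon
      have hss : {x : ℝ | rmax r q < x} ⊆ Set.Ioi t := fun x hx => by
        simp only [Set.mem_setOf_eq] at hx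
        exact Set.mem_Ioi.mpr (lt_of_le_of_lt hcon hx)
      exact absurd (le_trans (measure_mono hss) hIoi_t) (not_le.mpr hq)
    set T := Finset.univ.filter (fun i => t ≤ q i) with hT
    have hcard : T.card < r := by
      by_contra hge
      push_neg at hge
      exact absurd (rmax_ge_of_card hr hrN q t hge) (not_le.mpr hlt)
    refine Set.mem_iUnion₂.mpr ⟨T.card, Finset.mem_range.mpr hcard, ?_⟩
    refine Set.mem_iUnion₂.mpr ⟨T, Finset.mem_powersetCard.mpr ⟨Finset.subset_univ _, rfl⟩, ?_⟩
    refine Set.mem_univ_pi.mpr fun i => ?_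
    by_cases hi : i ∈ T
    · rw [if_pos hi]
      exact (Finset.mem_filter.mp hi).2
    · rw [if_neg hi]
      have hni : ¬ t ≤ q i := fun hcon => hi (Finset.mem_filter.mpr ⟨Finset.mem_univ _, hcon⟩)
      exact Set.mem_Iio.mpr (not_le.mp hni)
  have hE : ∀ T : Finset (Fin N),
      (Measure.pi fun _ : Fin N => μ) (E T)
        = pe ^ T.card * ENNReal.ofReal (1 - p) ^ (N - T.card) := by
    intro T
    rw [hEdef, Measure.pi_pi]
    have h1 : ∀ i : Fin N, μ (if i ∈ T then Set.Ici t else Set.Iio t)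
        = if i ∈ T then pe else ENNReal.ofReal (1 - p) := by
      intro i
      split
      · rfl
      · exact hIio
    rw [Finset.prod_congr rfl fun i _ => h1 i, Finset.prod_ite, Finset.prod_const,
      Finset.prod_const]
    have h2 : Finset.univ.filter (fun i => i ∈ T) = T := by ext i; simp
    have h3 : (Finset.univ.filter (fun i => ¬ i ∈ T)).card = N - T.card := by
      have hc : Finset.univ.filter (fun i => ¬ i ∈ T) = Tᶜ := by ext i; simp
      rw [hc, Finset.card_compl, Fintype.card_fin]
    rw [h2, h3]
  have hbound : (Measure.pi fun _ : Fin N => μ) goodᶜ ≤ ENNReal.ofReal δ := by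
    have hstep3 : ∀ k ∈ Finset.range r,
        (Measure.pi fun _ : Fin N => μ)
            (⋃ T ∈ Finset.powersetCard k (Finset.univ : Finset (Fin N)), E T)
          ≤ (N.choose k : ℝ≥0∞) * (ENNReal.ofReal p ^ k * ENNReal.ofReal (1 - p) ^ (N - k)) := by
      intro k _
      refine le_trans (measure_biUnion_finset_le _ _) ?_
      have h4 : ∀ T ∈ Finset.powersetCard k (Finset.univ : Finset (Fin N)),
          (Measure.pi fun _ : Fin N => μ) (E T)
            = ENNReal.ofReal p ^ k * ENNReal.ofReal (1 - p) ^ (N - k) := by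
        intro T hT
        rw [hE T, (Finset.mem_powersetCard.mp hT).2, hpe_eq]
      rw [Finset.sum_congr rfl h4, Finset.sum_const, Finset.card_powersetCard,
        Finset.card_univ, Fintype.card_fin, nsmul_eq_mul]
    have h1p : (0:ℝ) ≤ 1 - p := by linarith
    have h5 : ∑ k ∈ Finset.range r,
        (N.choose k : ℝ≥0∞) * (ENNReal.ofReal p ^ k * ENNReal.ofReal (1 - p) ^ (N - k))
          = ENNReal.ofReal (bsum r N p) := by
      unfold bsum
      rw [ENNReal.ofReal_sum_of_nonneg]
      · apply Finset.sum_congr rfl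
        intro k _
        rw [ENNReal.ofReal_mul (by positivity), ENNReal.ofReal_mul (by positivity),
          ENNReal.ofReal_pow hp0, ENNReal.ofReal_pow h1p, ENNReal.ofReal_natCast]
        ring
      · intro k _
        exact mul_nonneg (mul_nonneg (Nat.cast_nonneg _) (pow_nonneg hp0 _)) (pow_nonneg h1p _)
    have h8 : bsum r N ε ≤ δ := le_of_eq_of_le (binomCdf_eq_bsum hr hrN ε).symm hB
    have h7 : bsum r N p ≤ δ := le_trans (bsum_anti N r hε0.le hp1 hεp) h8
    calc (Measure.pi fun _ : Fin N => μ) goodᶜ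
        ≤ (Measure.pi fun _ : Fin N => μ) (⋃ k ∈ Finset.range r,
            ⋃ T ∈ Finset.powersetCard k (Finset.univ : Finset (Fin N)), E T) :=
          measure_mono hsub
      _ ≤ ∑ k ∈ Finset.range r, (Measure.pi fun _ : Fin N => μ)
            (⋃ T ∈ Finset.powersetCard k (Finset.univ : Finset (Fin N)), E T) :=
          measure_biUnion_finset_le _ _
      _ ≤ ∑ k ∈ Finset.range r,
            (N.choose k : ℝ≥0∞) * (ENNReal.ofReal p ^ k * ENNReal.ofReal (1 - p) ^ (N - k)) :=
          Finset.sum_le_sum hstep3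
      _ = ENNReal.ofReal (bsum r N p) := h5
      _ ≤ ENNReal.ofReal δ := ENNReal.ofReal_le_ofReal h7
  have hone : (1 : ℝ≥0∞) ≤ (Measure.pi fun _ : Fin N => μ) good
      + (Measure.pi fun _ : Fin N => μ) goodᶜ := by
    have h9 := measure_union_le (μ := Measure.pi fun _ : Fin N => μ) good goodᶜ
    rwa [Set.union_compl_self, measure_univ] at h9
  have h10 : (1 : ℝ≥0∞) - (Measure.pi fun _ : Fin N => μ) goodᶜ
      ≤ (Measure.pi fun _ : Fin N => μ) good := tsub_le_iff_right.mpr hone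
  have h11 : ENNReal.ofReal (1 - δ) = 1 - ENNReal.ofReal δ := by
    rw [ENNReal.ofReal_sub _ hδ0.le, ENNReal.ofReal_one]
  rw [h11]
  exact le_trans (tsub_le_tsub_left hbound 1) h10
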